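/- Let B be a domain of characteristic zero and Δ a set of locally nilpotent derivations of B. Then B ∩ K_Δ = A_Δ, where A_Δ = ⋂_{D∈Δ} ker D and K_Δ = ⋂_{D∈Δ} Frac(ker D) inside Frac(B). In particular, B ∩ FML(B) = ML(B). -/

import Mathlib

def IsLND {B : Type*} [CommRing B] (D : B → B) : Prop :=
  (∀ a b : B, D (a + b) = D a + D b) ∧
  (∀ a b : B, D (a * b) = a * D b + D a * b) ∧
  (∀ x : B, ∃ n : ℕ, D^[n] x = 0)

/-- If `B` is a domain of characteristic zero and `Δ` a set of locally nilpotent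
derivations of `B`, then `B ∩ K_Δ = A_Δ` inside `L = Frac B`, where
`A_Δ = ⋂_{D ∈ Δ} ker D` and `K_Δ = ⋂_{D ∈ Δ} Frac (ker D)`. -/
theorem stmt14 {B L : Type*} [CommRing B] [IsDomain B] [CharZero B]
    [Field L] [Algebra B L] [IsFractionRing B L]
    (Δ : Set (B → B)) (hΔ : ∀ D ∈ Δ, IsLND D) :
    ∀ x : B,
      algebraMap B L x ∈ ⨅ D ∈ Δ, Subfield.closure ((algebraMap B L) '' {y : B | D y = 0})
      ↔ (∀ D ∈ Δ, D x = 0) := by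
  intro x
  set f := algebraMap B L with hf
  have finj : Function.Injective f := IsFractionRing.injective B L
  constructor
  · intro hx D hD
    simp only [Subfield.mem_iInf] at hx
    obtain ⟨hadd, hmul, -⟩ := hΔ D hD
    have hD1 : D 1 = 0 := by
      have h := hmul 1 1
      simp only [one_mul, mul_one] at h
      exact (right_eq_add.mp h)
    have hD0 : D 0 = 0 := by
      have h := hadd 0 0
      simp only [add_zero] at h
      exact (right_eq_add.mp h)
    have hDneg : ∀ a : B, D a = 0 → D (-a) = 0 := by
      intro a ha
      have h := hadd a (-a)
      simp only [add_neg_cancel, hD0, ha, zero_add] at h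
      exact h.symm
    have hKmul : ∀ a b : B, D a = 0 → D b = 0 → D (a * b) = 0 := by
      intro a b ha hb; rw [hmul, ha, hb]; ring
    have hKadd : ∀ a b : B, D a = 0 → D b = 0 → D (a + b) = 0 := by
      intro a b ha hb; rw [hadd, ha, hb]; ring
    have fne : ∀ b : B, b ≠ 0 → f b ≠ 0 := by
      intro b hb hc
      exact hb (finj (by simpa using hc))
    let T : Subfield L :=
      { carrier := {z | ∃ a b : B, D a = 0 ∧ D b = 0 ∧ b ≠ 0 ∧ z * f b = f a}
        one_mem' := ⟨1, 1, hD1, hD1, one_ne_zero, by simp⟩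
        zero_mem' := ⟨0, 1, hD0, hD1, one_ne_zero, by simp⟩
        mul_mem' := by
          rintro z w ⟨a, b, ha, hb, hb0, h1⟩ ⟨c, d, hc, hd, hd0, h2⟩
          refine ⟨a * c, b * d, hKmul _ _ ha hc, hKmul _ _ hb hd, mul_ne_zero hb0 hd0, ?_⟩
          rw [map_mul, map_mul]
          calc z * w * (f b * f d) = (z * f b) * (w * f d) := by ring
            _ = f a * f c := by rw [h1, h2]
        add_mem' := by
          rintro z w ⟨a, b, ha, hb, hb0, h1⟩ ⟨c, d, hc, hd, hd0, h2⟩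
          refine ⟨a * d + c * b, b * d, hKadd _ _ (hKmul _ _ ha hd) (hKmul _ _ hc hb),
            hKmul _ _ hb hd, mul_ne_zero hb0 hd0, ?_⟩
          rw [map_add, map_mul, map_mul, map_mul]
          calc (z + w) * (f b * f d) = (z * f b) * f d + (w * f d) * f b := by ring
            _ = f a * f d + f c * f b := by rw [h1, h2]
        neg_mem' := by
          rintro z ⟨a, b, ha, hb, hb0, h1⟩
          exact ⟨-a, b, hDneg a ha, hb, hb0, by rw [map_neg, neg_mul, h1]⟩
        inv_mem' := by
          rintro z ⟨a, b, ha, hb, hb0, h1⟩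
          by_cases hz : z = 0
          · exact ⟨0, 1, hD0, hD1, one_ne_zero, by simp [hz]⟩
          · have hfa : f a ≠ 0 := by
              rw [← h1]; exact mul_ne_zero hz (fne b hb0)
            refine ⟨b, a, hb, ha, fun h0 => hfa (by rw [h0, map_zero]), ?_⟩
            field_simp
            rw [← h1] }
    have hsub : f '' {y : B | D y = 0} ⊆ (T : Set L) := by
      rintro _ ⟨y, hy, rfl⟩
      exact ⟨y, 1, hy, hD1, one_ne_zero, by simp⟩
    obtain ⟨a, b, ha, hb, hb0, heq⟩ := Subfield.closure_le.mpr hsub (hx D hD)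
    have hxb : x * b = a := by
      apply finj
      rw [map_mul]; exact heq
    have hda : D (x * b) = 0 := by rw [hxb]; exact ha
    rw [hmul, hb, mul_zero, zero_add] at hda
    rcases mul_eq_zero.mp hda with h | h
    · exact h
    · exact absurd h hb0
  · intro h
    simp only [Subfield.mem_iInf]
    intro D hD
    exact Subfield.subset_closure ⟨x, h D hD, rfl⟩
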